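/- Let k be a field and d an even integer with d ≥ 2. In k[x_1,…,x_{d+1},z,T] let Q be the ideal generated by x_1x_2⋯x_{d+1}, by T·∏_{i=1}^{d/2} x_{2i}, and by (zT − x_1x_{d+1})·∏_{i=1}^{(d/2)−1} x_{2i+1} (where an empty product equals 1), and set S = k[x_1,…,x_{d+1},z,T]/Q. Then the image of z in S is a non-zero-divisor of S, and S/(z) is isomorphic as a k-algebra to k[x_1,…,x_{d+2}]/(∏_{i=0}^{d/2} x_{2i+1}, ∏_{i=1}^{(d/2)+1} x_{2i}), which is the Stanley–Reisner ring k[Δ(d,d+2)] of the boundary complex of the d-dimensional cyclic polytope with d+2 vertices. -/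

import Mathlib

/-- The variable `x_t` (1-indexed, for `1 ≤ t ≤ n`) of the polynomial ring
`k[x_1, …, x_n]`, realized as `MvPolynomial (Fin n) k`. -/
noncomputable def Xv (k : Type*) [Field k] (n t : ℕ) : MvPolynomial (Fin n) k :=
  if h : 1 ≤ t ∧ t ≤ n then MvPolynomial.X ⟨t - 1, by omega⟩ else 0

/-- The ideal `I_{a,p,q}` of `k[x_1, …, x_n]`, generated by the squarefree monomials
`x_{t_1} ⋯ x_{t_a}` with `p ≤ t_1 < t_2 < ⋯ < t_a ≤ q` and `t_{j+1} ≥ t_j + 2`. -/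
noncomputable def idealI (k : Type*) [Field k] (n a p q : ℕ) :
    Ideal (MvPolynomial (Fin n) k) :=
  Ideal.span { f | ∃ t : ℕ → ℕ, p ≤ t 0 ∧ t (a - 1) ≤ q ∧
    (∀ j, j + 1 < a → t j + 2 ≤ t (j + 1)) ∧
    f = ∏ j ∈ Finset.range a, Xv k n (t j) }

set_option synthInstance.maxHeartbeats 1000000
set_option maxHeartbeats 1000000

open MvPolynomial Finset

namespace Unproj

variable {k : Type*} [Field k] {σ : Type*}

/-- Substitution killing the variable `i`. -/
noncomputable def phi [DecidableEq σ] (i : σ) : MvPolynomial σ k →ₐ[k] MvPolynomial σ k :=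
  aeval (fun j => if j = i then 0 else X j)

lemma phi_X_self [DecidableEq σ] (i : σ) : phi (k := k) i (X i) = 0 := by simp [phi]

lemma phi_X_ne [DecidableEq σ] {i j : σ} (h : j ≠ i) : phi (k := k) i (X j) = X j := by
  simp [phi, h]

lemma X_dvd_sub_phi [DecidableEq σ] (i : σ) (p : MvPolynomial σ k) :
    X i ∣ p - phi i p := by
  induction p using MvPolynomial.induction_on with
  | C a => simp [phi]
  | add p q hp hq =>
      have h : p + q - phi i (p + q) = (p - phi i p) + (q - phi i q) := by
        rw [map_add]; ring
      rw [h]; exact dvd_add hp hq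
  | mul_X p j hp =>
      have hkey : p * X j - phi i (p * X j)
          = (p - phi i p) * X j + phi i p * (X j - phi i (X j)) := by rw [map_mul]; ring
      rw [hkey]
      refine dvd_add (Dvd.dvd.mul_right hp _) (Dvd.dvd.mul_left ?_ _)
      by_cases hji : j = i
      · subst hji; rw [phi_X_self, sub_zero]
      · rw [phi_X_ne hji]; simp

lemma X_dvd_iff_phi [DecidableEq σ] (i : σ) (p : MvPolynomial σ k) :
    X i ∣ p ↔ phi i p = 0 := by
  constructor
  · rintro ⟨c, rfl⟩; rw [map_mul, phi_X_self, zero_mul]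
  · intro h
    have := X_dvd_sub_phi i p
    rwa [h, sub_zero] at this

lemma prime_X' (i : σ) : Prime (X i : MvPolynomial σ k) := by
  classical
  refine ⟨X_ne_zero i, ?_, ?_⟩
  · intro hu
    have := hu.map (phi (k := k) i)
    rw [phi_X_self] at this
    exact not_isUnit_zero this
  · intro a b hab
    rw [X_dvd_iff_phi, map_mul, mul_eq_zero] at hab
    rcases hab with h | h
    · exact Or.inl ((X_dvd_iff_phi i a).2 h)
    · exact Or.inr ((X_dvd_iff_phi i b).2 h)

lemma X_not_dvd_prod [DecidableEq σ] (i : σ) (t : Finset ℕ) (w : ℕ → σ)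
    (hw : ∀ j ∈ t, w j ≠ i) :
    ¬ ((X i : MvPolynomial σ k) ∣ ∏ j ∈ t, X (w j)) := by
  rintro ⟨c, hc⟩
  have := congrArg (eval (fun l : σ => if l = i then (0 : k) else 1)) hc
  rw [eval_mul, eval_X, if_pos rfl, zero_mul, eval_prod] at this
  have h1 : ∀ j ∈ t, eval (fun l : σ => if l = i then (0 : k) else 1) (X (w j)) = 1 := by
    intro j hj; rw [eval_X, if_neg (hw j hj)]
  rw [Finset.prod_congr rfl h1, Finset.prod_const_one] at this
  exact one_ne_zero this

lemma prod_X_dvd_of_dvd_mul (s t : Finset ℕ) (v w : ℕ → σ)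
    (hvw : ∀ i ∈ s, ∀ j ∈ t, v i ≠ w j) (p : MvPolynomial σ k)
    (hdvd : (∏ i ∈ s, X (v i)) ∣ p * ∏ j ∈ t, X (w j)) :
    (∏ i ∈ s, X (v i)) ∣ p := by
  classical
  induction s using Finset.induction_on generalizing p with
  | empty => simpa using one_dvd p
  | insert a s' ha IH =>
      rw [Finset.prod_insert ha] at hdvd ⊢
      have hXa : (X (v a) : MvPolynomial σ k) ∣ p * ∏ j ∈ t, X (w j) :=
        dvd_trans (Dvd.intro _ rfl) hdvd
      rcases (prime_X' (v a)).2.2 _ _ hXa with hpa | hmt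
      · obtain ⟨p', rfl⟩ := hpa
        have h2 : (∏ i ∈ s', X (v i) : MvPolynomial σ k) ∣ p' * ∏ j ∈ t, X (w j) := by
          have h3 : (X (v a) : MvPolynomial σ k) * (∏ i ∈ s', X (v i)) ∣
              X (v a) * (p' * ∏ j ∈ t, X (w j)) := by rw [← mul_assoc]; exact hdvd
          exact (mul_dvd_mul_iff_left (X_ne_zero (v a))).1 h3
        exact mul_dvd_mul_left _ (IH (fun i hi j hj => hvw i (Finset.mem_insert_of_mem hi) j hj) p' h2)
      · exact absurd hmt (X_not_dvd_prod (v a) t w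
          (fun j hj => fun h => hvw a (Finset.mem_insert_self a s') j hj h.symm))



variable {R : Type*} [CommRing R]

lemma prod_Icc_split (u : ℕ → R) (e : ℕ) :
    ∏ i ∈ Finset.Icc 1 (2 * e + 1), u i =
      (∏ i ∈ Finset.Icc 0 e, u (2 * i + 1)) * ∏ i ∈ Finset.Icc 1 e, u (2 * i) := by
  induction e with
  | zero => norm_num
  | succ e IH =>
      have h1 : Finset.Icc 1 (2 * (e + 1) + 1)
          = insert (2 * e + 2) (insert (2 * e + 3) (Finset.Icc 1 (2 * e + 1))) := by
        ext x; simp <;> omega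
      have h2 : Finset.Icc 0 (e + 1) = insert (e + 1) (Finset.Icc 0 e) := by
        ext x; simp <;> omega
      have h3 : Finset.Icc 1 (e + 1) = insert (e + 1) (Finset.Icc 1 e) := by
        ext x; simp <;> omega
      rw [h1, h2, h3, Finset.prod_insert (by simp), Finset.prod_insert (by simp),
        Finset.prod_insert (by simp), Finset.prod_insert (by simp), IH,
        show 2 * (e + 1) + 1 = 2 * e + 3 from by ring, show 2 * (e + 1) = 2 * e + 2 from by ring]
      ring

lemma prod_odd_head (u : ℕ → R) (e : ℕ) (he : 1 ≤ e) :
    ∏ i ∈ Finset.Icc 0 e, u (2 * i + 1) =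
      u 1 * u (2 * e + 1) * ∏ i ∈ Finset.Icc 1 (e - 1), u (2 * i + 1) := by
  obtain ⟨e', rfl⟩ : ∃ e', e = e' + 1 := ⟨e - 1, by omega⟩
  have h2 : Finset.Icc 0 (e' + 1) = insert 0 (insert (e' + 1) (Finset.Icc 1 e')) := by
    ext x; simp <;> omega
  rw [h2, Finset.prod_insert (by simp), Finset.prod_insert (by simp),
    show e' + 1 - 1 = e' from rfl, show 2 * 0 + 1 = 1 from rfl]
  ring



variable {k : Type*} [Field k]

section Defs

variable (k)
variable (e : ℕ)

lemma Xv_eq (n t : ℕ) (h1 : 1 ≤ t) (h2 : t ≤ n) (h3 : t - 1 < n) :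
    Xv k n t = X ⟨t - 1, h3⟩ := dif_pos ⟨h1, h2⟩

def zI : Fin (e + e + 3) := ⟨e + e + 1, by omega⟩

noncomputable def Ep : MvPolynomial (Fin (e + e + 3)) k :=
  ∏ i ∈ Finset.Icc 1 e, Xv k (e + e + 3) (2 * i)

noncomputable def Op : MvPolynomial (Fin (e + e + 3)) k :=
  ∏ i ∈ Finset.Icc 1 (e - 1), Xv k (e + e + 3) (2 * i + 1)

noncomputable def fp : MvPolynomial (Fin (e + e + 3)) k :=
  ∏ i ∈ Finset.Icc 1 (e + e + 1), Xv k (e + e + 3) i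

noncomputable def gp : MvPolynomial (Fin (e + e + 3)) k :=
  Xv k (e + e + 3) (e + e + 3) * Ep k e

noncomputable def hp : MvPolynomial (Fin (e + e + 3)) k :=
  (Xv k (e + e + 3) (e + e + 2) * Xv k (e + e + 3) (e + e + 3) -
    Xv k (e + e + 3) 1 * Xv k (e + e + 3) (e + e + 1)) * Op k e

noncomputable def M1 : MvPolynomial (Fin (e + e + 3)) k :=
  Xv k (e + e + 3) 1 * Xv k (e + e + 3) (e + e + 1) * Op k e

lemma hz_eq : Xv k (e + e + 3) (e + e + 2) = X (zI e) := by
  rw [Xv_eq k _ _ (by omega) (by omega) (by omega)]; rfl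

end Defs


section Phi

variable (e : ℕ)

lemma phi_idem {σ : Type*} [DecidableEq σ] (i : σ) (q : MvPolynomial σ k) :
    phi i (phi i q) = phi i q := by
  have h : (phi i).comp (phi i) = (phi (k := k) i) := by
    apply MvPolynomial.algHom_ext
    intro j
    by_cases hj : j = i
    · subst hj; simp [phi_X_self]
    · simp [phi_X_ne hj]
  calc phi i (phi i q) = ((phi i).comp (phi i)) q := rfl
    _ = phi i q := by rw [h]

lemma phi_Xv (t : ℕ) (h1 : 1 ≤ t) (h2 : t ≤ e + e + 3) (h3 : t ≠ e + e + 2) :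
    phi (zI e) (Xv k (e + e + 3) t) = Xv k (e + e + 3) t := by
  rw [Xv_eq k _ t h1 h2 (by omega)]
  exact phi_X_ne (by simp only [ne_eq, zI, Fin.mk.injEq]; omega)

lemma phi_z : phi (zI e) (Xv k (e + e + 3) (e + e + 2)) = 0 := by
  rw [hz_eq]; exact phi_X_self _

lemma phi_Ep : phi (zI e) (Ep k e) = Ep k e := by
  unfold Ep; rw [map_prod]
  exact Finset.prod_congr rfl fun i hi => by
    simp only [Finset.mem_Icc] at hi
    exact phi_Xv e (2 * i) (by omega) (by omega) (by omega)

lemma phi_Op : phi (zI e) (Op k e) = Op k e := by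
  unfold Op; rw [map_prod]
  exact Finset.prod_congr rfl fun i hi => by
    simp only [Finset.mem_Icc] at hi
    exact phi_Xv e (2 * i + 1) (by omega) (by omega) (by omega)

lemma phi_gp : phi (zI e) (gp k e) = gp k e := by
  unfold gp
  rw [map_mul, phi_Ep, phi_Xv e (e + e + 3) (by omega) (by omega) (by omega)]

lemma phi_hp : phi (zI e) (hp k e) = - M1 k e := by
  unfold hp M1
  rw [map_mul, map_sub, map_mul, map_mul, phi_Op, phi_z,
    phi_Xv e 1 (by omega) (by omega) (by omega),
    phi_Xv e (e + e + 1) (by omega) (by omega) (by omega),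
    phi_Xv e (e + e + 3) (by omega) (by omega) (by omega)]
  ring

lemma hf_split (he : 1 ≤ e) : fp k e = M1 k e * Ep k e := by
  unfold fp M1 Ep Op
  rw [show e + e + 1 = 2 * e + 1 from by ring,
    prod_Icc_split (fun t => Xv k (e + e + 3) t) e,
    prod_odd_head (fun t => Xv k (e + e + 3) t) e he,
    show 2 * e + 1 = e + e + 1 from by ring]

lemma hM1_eq : M1 k e = Xv k (e + e + 3) (e + e + 2) * (Xv k (e + e + 3) (e + e + 3) * Op k e)
    - hp k e := by
  unfold M1 hp; ring

lemma hfgh (he : 1 ≤ e) :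
    fp k e = Xv k (e + e + 3) (e + e + 2) * Op k e * gp k e - Ep k e * hp k e := by
  rw [hf_split e he, hM1_eq]; unfold gp; ring

lemma Ep_ne_zero : Ep k e ≠ 0 := by
  unfold Ep
  rw [Finset.prod_ne_zero_iff]
  intro i hi
  simp only [Finset.mem_Icc] at hi
  rw [Xv_eq k _ _ (by omega) (by omega) (by omega)]
  exact X_ne_zero _

lemma gp_ne_zero : gp k e ≠ 0 := by
  unfold gp
  refine mul_ne_zero ?_ (Ep_ne_zero e)
  rw [Xv_eq k _ _ (by omega) (by omega) (by omega)]
  exact X_ne_zero _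

end Phi

section Dvd

variable (e : ℕ)

lemma gp_dvd (he : 1 ≤ e) (c : MvPolynomial (Fin (e + e + 3)) k)
    (h : gp k e ∣ c * M1 k e) : gp k e ∣ c := by
  classical
  set v : ℕ → Fin (e + e + 3) := fun i =>
    if i = e + e + 9 then ⟨e + e + 2, by omega⟩
    else ⟨(2 * i - 1) % (e + e + 3), Nat.mod_lt _ (by omega)⟩ with hv
  set w : ℕ → Fin (e + e + 3) := fun j =>
    ⟨(2 * j) % (e + e + 3), Nat.mod_lt _ (by omega)⟩ with hw
  have hvlow : ∀ i, 1 ≤ i → i ≤ e → ((v i : ℕ)) = 2 * i - 1 := by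
    intro i h1 h2
    rw [hv]
    simp only
    rw [if_neg (by omega)]
    exact Nat.mod_eq_of_lt (by omega)
  have hwlow : ∀ j, j ≤ e → ((w j : ℕ)) = 2 * j := by
    intro j h2
    exact Nat.mod_eq_of_lt (by omega)
  have hgp : gp k e = ∏ i ∈ insert (e + e + 9) (Finset.Icc 1 e), X (v i) := by
    rw [Finset.prod_insert (by simp only [Finset.mem_Icc]; omega)]
    unfold gp Ep
    congr 1
    · rw [Xv_eq k _ _ (by omega) (by omega) (by omega), hv]
      simp
    · refine Finset.prod_congr rfl fun i hi => ?_
      simp only [Finset.mem_Icc] at hi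
      rw [Xv_eq k _ _ (by omega) (by omega) (by omega)]
      exact congrArg X (Fin.ext (by rw [hvlow i hi.1 hi.2]))
  have hM1 : M1 k e = ∏ j ∈ insert 0 (insert e (Finset.Icc 1 (e - 1))), X (w j) := by
    rw [Finset.prod_insert (by simp only [Finset.mem_insert, Finset.mem_Icc]; omega),
      Finset.prod_insert (by simp only [Finset.mem_Icc]; omega)]
    unfold M1 Op
    rw [Xv_eq k _ 1 (by omega) (by omega) (by omega),
      Xv_eq k _ (e + e + 1) (by omega) (by omega) (by omega)]
    have e1 : (X (⟨1 - 1, by omega⟩ : Fin (e + e + 3)) : MvPolynomial (Fin (e + e + 3)) k)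
        = X (w 0) := congrArg X (Fin.ext (by show 1 - 1 = ((w 0 : ℕ)); rw [hwlow 0 (by omega)]))
    have e2 : (X (⟨e + e + 1 - 1, by omega⟩ : Fin (e + e + 3)) : MvPolynomial (Fin (e + e + 3)) k)
        = X (w e) := congrArg X (Fin.ext (by show e + e + 1 - 1 = ((w e : ℕ)); rw [hwlow e (by omega)]; omega))
    have e3 : ∏ i ∈ Finset.Icc 1 (e - 1), Xv k (e + e + 3) (2 * i + 1)
        = ∏ j ∈ Finset.Icc 1 (e - 1), X (w j) := by
      refine Finset.prod_congr rfl fun i hi => ?_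
      simp only [Finset.mem_Icc] at hi
      rw [Xv_eq k _ _ (by omega) (by omega) (by omega)]
      exact congrArg X (Fin.ext (by show 2 * i + 1 - 1 = ((w i : ℕ)); rw [hwlow i (by omega)]; omega))
    rw [e1, e2, e3]
    ring
  have hvw : ∀ i ∈ insert (e + e + 9) (Finset.Icc 1 e),
      ∀ j ∈ insert 0 (insert e (Finset.Icc 1 (e - 1))), v i ≠ w j := by
    intro i hi j hj
    have hj' : j ≤ e := by
      simp only [Finset.mem_insert, Finset.mem_Icc] at hj; omega
    have hwj : ((w j : ℕ)) = 2 * j := hwlow j hj'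
    rcases Finset.mem_insert.1 hi with rfl | hi'
    · intro hc
      have hvi : ((v (e + e + 9) : ℕ)) = e + e + 2 := by rw [hv]; simp
      rw [hc, hwj] at hvi
      omega
    · simp only [Finset.mem_Icc] at hi'
      intro hc
      have hvi : ((v i : ℕ)) = 2 * i - 1 := hvlow i hi'.1 hi'.2
      rw [hc, hwj] at hvi
      omega
  rw [hgp, hM1] at h
  rw [hgp]
  exact prod_X_dvd_of_dvd_mul _ _ v w hvw c h

end Dvd

section NZD

variable (e : ℕ)

lemma mul_z_mem (he : 1 ≤ e) (Q : Ideal (MvPolynomial (Fin (e + e + 3)) k))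
    (hQ : Q = Ideal.span {fp k e} + Ideal.span {gp k e} + Ideal.span {hp k e})
    (p : MvPolynomial (Fin (e + e + 3)) k)
    (hm : p * X (zI e) ∈ Q) : p ∈ Q := by
  classical
  have hg_mem : gp k e ∈ Q := by
    rw [hQ, Submodule.add_eq_sup, Submodule.add_eq_sup]
    exact Submodule.mem_sup_left (Submodule.mem_sup_right (Ideal.subset_span rfl))
  have hh_mem : hp k e ∈ Q := by
    rw [hQ, Submodule.add_eq_sup, Submodule.add_eq_sup]
    exact Submodule.mem_sup_right (Ideal.subset_span rfl)
  -- representation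
  rw [hQ, Submodule.add_eq_sup, Submodule.add_eq_sup] at hm
  obtain ⟨u, hu, w3, hw3, huw⟩ := Submodule.mem_sup.1 hm
  obtain ⟨u1, hu1, u2, hu2, hu12⟩ := Submodule.mem_sup.1 hu
  obtain ⟨α, hα⟩ := Ideal.mem_span_singleton'.1 hu1
  obtain ⟨β, hβ⟩ := Ideal.mem_span_singleton'.1 hu2
  obtain ⟨γ, hγ⟩ := Ideal.mem_span_singleton'.1 hw3
  have h0 : p * X (zI e) = α * fp k e + β * gp k e + γ * hp k e := by
    rw [hα, hβ, hγ, hu12, huw]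
  rw [hfgh e he] at h0
  set a : MvPolynomial (Fin (e + e + 3)) k
    := α * (Xv k (e + e + 3) (e + e + 2) * Op k e) + β with ha
  set b : MvPolynomial (Fin (e + e + 3)) k := γ - α * Ep k e with hb
  have hab : p * X (zI e) = a * gp k e + b * hp k e := by
    rw [ha, hb]; linear_combination h0
  have hphab := congrArg (phi (zI e)) hab
  rw [map_mul, map_add, map_mul, map_mul, phi_X_self, mul_zero, phi_gp, phi_hp] at hphab
  have h1 : phi (zI e) a * gp k e = phi (zI e) b * M1 k e := by linear_combination -hphab
  have hdvd : gp k e ∣ phi (zI e) b * M1 k e := ⟨phi (zI e) a, by linear_combination -h1⟩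
  obtain ⟨c, hc⟩ := gp_dvd e he _ hdvd
  have hphic : phi (zI e) c = c := by
    have h2 := congrArg (phi (zI e)) hc
    rw [phi_idem, map_mul, phi_gp, hc] at h2
    exact (mul_left_cancel₀ (gp_ne_zero e) h2.symm)
  have hphia : phi (zI e) a = c * M1 k e := by
    have h3 : phi (zI e) a * gp k e = (c * M1 k e) * gp k e := by
      rw [h1, hc]; ring
    exact mul_right_cancel₀ (gp_ne_zero e) h3
  have hXa : X (zI e) ∣ a + c * hp k e := by
    rw [X_dvd_iff_phi, map_add, map_mul, hphia, hphic, phi_hp]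
    ring
  have hXb : X (zI e) ∣ b - c * gp k e := by
    rw [X_dvd_iff_phi, map_sub, map_mul, hphic, phi_gp, hc]
    ring
  obtain ⟨a2, ha2⟩ := hXa
  obtain ⟨b2, hb2⟩ := hXb
  have hfin : p * X (zI e) = (a2 * gp k e + b2 * hp k e) * X (zI e) := by
    have : p * X (zI e) = (a + c * hp k e) * gp k e + (b - c * gp k e) * hp k e := by
      rw [hab]; ring
    rw [this, ha2, hb2]; ring
  have hp_eq : p = a2 * gp k e + b2 * hp k e := mul_right_cancel₀ (X_ne_zero _) hfin
  rw [hp_eq]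
  exact Ideal.add_mem _ (Ideal.mul_mem_left _ _ hg_mem) (Ideal.mul_mem_left _ _ hh_mem)

end NZD

section Pand

variable (k)
variable (e : ℕ)

noncomputable def pand : MvPolynomial (Fin (e + e + 3)) k →ₐ[k] MvPolynomial (Fin (e + e + 2)) k :=
  aeval fun i => if h : (i : ℕ) < e + e + 1 then X ⟨(i : ℕ), by omega⟩
    else if (i : ℕ) = e + e + 1 then 0 else X ⟨e + e + 1, by omega⟩

noncomputable def sand : MvPolynomial (Fin (e + e + 2)) k →ₐ[k] MvPolynomial (Fin (e + e + 3)) k :=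
  aeval fun j => if (j : ℕ) < e + e + 1 then X ⟨(j : ℕ), by omega⟩ else X ⟨e + e + 2, by omega⟩

lemma pand_sand : (pand k e).comp (sand k e) = AlgHom.id k _ := by
  apply MvPolynomial.algHom_ext
  intro j
  simp only [AlgHom.comp_apply, sand, aeval_X, AlgHom.id_apply]
  by_cases hj : (j : ℕ) < e + e + 1
  · rw [if_pos hj]
    simp only [pand, aeval_X]
    rw [dif_pos (show ((⟨(j : ℕ), by omega⟩ : Fin (e + e + 3)) : ℕ) < e + e + 1 from hj)]
  · rw [if_neg hj]
    simp only [pand, aeval_X]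
    rw [dif_neg (by simp <;> omega), if_neg (by simp <;> omega)]
    exact congrArg X (Fin.ext (by simp <;> omega))

lemma sand_pand : (sand k e).comp (pand k e) = phi (zI e) := by
  apply MvPolynomial.algHom_ext
  intro i
  simp only [AlgHom.comp_apply, pand, aeval_X]
  by_cases h1 : (i : ℕ) < e + e + 1
  · rw [dif_pos h1]
    simp only [sand, aeval_X]
    rw [if_pos (show ((⟨(i : ℕ), by omega⟩ : Fin (e + e + 2)) : ℕ) < e + e + 1 from h1)]
    rw [phi_X_ne (show i ≠ zI e by simp only [ne_eq, zI, Fin.ext_iff]; omega)]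
  · rw [dif_neg h1]
    by_cases h2 : (i : ℕ) = e + e + 1
    · rw [if_pos h2, map_zero]
      have : i = zI e := Fin.ext h2
      rw [this, phi_X_self]
    · rw [if_neg h2]
      simp only [sand, aeval_X]
      rw [if_neg (by simp)]
      rw [phi_X_ne (show i ≠ zI e by simp only [ne_eq, zI, Fin.ext_iff]; omega)]
      exact congrArg X (Fin.ext (by simp <;> omega))

lemma pand_surj : Function.Surjective (pand k e) := fun y =>
  ⟨sand k e y, by rw [← AlgHom.comp_apply, pand_sand]; rfl⟩

lemma pand_ker {p : MvPolynomial (Fin (e + e + 3)) k} (hp : pand k e p = 0) :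
    p ∈ Ideal.span {(X (zI e) : MvPolynomial (Fin (e + e + 3)) k)} := by
  rw [Ideal.mem_span_singleton]
  have h := X_dvd_sub_phi (zI e) p
  have h2 : phi (zI e) p = 0 := by
    rw [← sand_pand]
    simp only [AlgHom.comp_apply, hp, map_zero]
  rwa [h2, sub_zero] at h

lemma pand_Xv_low (t : ℕ) (h1 : 1 ≤ t) (h2 : t ≤ e + e + 1) :
    pand k e (Xv k (e + e + 3) t) = Xv k (e + e + 2) t := by
  rw [Xv_eq k _ t h1 (by omega) (by omega), Xv_eq k _ t h1 (by omega) (by omega)]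
  simp only [pand, aeval_X]
  rw [dif_pos (show ((⟨t - 1, by omega⟩ : Fin (e + e + 3)) : ℕ) < e + e + 1 from by simp <;> omega)]

lemma pand_T : pand k e (Xv k (e + e + 3) (e + e + 3)) = Xv k (e + e + 2) (e + e + 2) := by
  rw [Xv_eq k _ _ (by omega) (by omega) (by omega), Xv_eq k _ _ (by omega) (by omega) (by omega)]
  simp only [pand, aeval_X]
  rw [dif_neg (by simp <;> omega), if_neg (by simp <;> omega)]
  exact congrArg X (Fin.ext (by simp <;> omega))

lemma pand_z : pand k e (Xv k (e + e + 3) (e + e + 2)) = 0 := by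
  rw [Xv_eq k _ _ (by omega) (by omega) (by omega)]
  simp only [pand, aeval_X]
  rw [dif_neg (by simp <;> omega), if_pos (by simp <;> omega)]

end Pand

section Images

variable (k)
variable (e : ℕ)

noncomputable def M1B : MvPolynomial (Fin (e + e + 2)) k :=
  ∏ i ∈ Finset.Icc 0 e, Xv k (e + e + 2) (2 * i + 1)

noncomputable def M2B : MvPolynomial (Fin (e + e + 2)) k :=
  ∏ i ∈ Finset.Icc 1 (e + 1), Xv k (e + e + 2) (2 * i)

lemma pand_Ep : pand k e (Ep k e) = ∏ i ∈ Finset.Icc 1 e, Xv k (e + e + 2) (2 * i) := by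
  unfold Ep; rw [map_prod]
  exact Finset.prod_congr rfl fun i hi => by
    simp only [Finset.mem_Icc] at hi
    exact pand_Xv_low k e (2 * i) (by omega) (by omega)

lemma pand_Op : pand k e (Op k e) = ∏ i ∈ Finset.Icc 1 (e - 1), Xv k (e + e + 2) (2 * i + 1) := by
  unfold Op; rw [map_prod]
  exact Finset.prod_congr rfl fun i hi => by
    simp only [Finset.mem_Icc] at hi
    exact pand_Xv_low k e (2 * i + 1) (by omega) (by omega)

lemma pand_gp : pand k e (gp k e) = M2B k e := by
  unfold gp M2B
  rw [map_mul, pand_Ep, pand_T]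
  rw [Finset.prod_Icc_succ_top (show 1 ≤ e + 1 from by omega),
    show 2 * (e + 1) = e + e + 2 from by ring]
  ring

lemma pand_M1 (he : 1 ≤ e) : pand k e (M1 k e) = M1B k e := by
  unfold M1 M1B
  rw [map_mul, map_mul, pand_Op,
    pand_Xv_low k e 1 (by omega) (by omega), pand_Xv_low k e (e + e + 1) (by omega) (by omega),
    prod_odd_head (fun t => Xv k (e + e + 2) t) e he,
    show 2 * e + 1 = e + e + 1 from by ring]

lemma pand_hp (he : 1 ≤ e) : pand k e (hp k e) = - M1B k e := by
  unfold hp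
  rw [map_mul, map_sub, map_mul, map_mul, pand_Op, pand_z, pand_T,
    pand_Xv_low k e 1 (by omega) (by omega), pand_Xv_low k e (e + e + 1) (by omega) (by omega),
    ← pand_M1 k e he]
  unfold M1
  rw [map_mul, map_mul, pand_Op,
    pand_Xv_low k e 1 (by omega) (by omega), pand_Xv_low k e (e + e + 1) (by omega) (by omega)]
  ring

lemma pand_fp (he : 1 ≤ e) :
    pand k e (fp k e) = M1B k e * ∏ i ∈ Finset.Icc 1 e, Xv k (e + e + 2) (2 * i) := by
  rw [hf_split e he, map_mul, pand_M1 k e he, pand_Ep]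

end Images

section AuxMain

variable (k)
variable (e : ℕ)

lemma ker_iff (he : 1 ≤ e) (Q : Ideal (MvPolynomial (Fin (e + e + 3)) k))
    (hQ : Q = Ideal.span {fp k e} + Ideal.span {gp k e} + Ideal.span {hp k e})
    (p : MvPolynomial (Fin (e + e + 3)) k) :
    pand k e p ∈ Ideal.span {M1B k e} + Ideal.span {M2B k e} ↔
      p ∈ Q ⊔ Ideal.span {(X (zI e) : MvPolynomial (Fin (e + e + 3)) k)} := by
  have hgpQ : gp k e ∈ Q := by
    rw [hQ, Submodule.add_eq_sup, Submodule.add_eq_sup]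
    exact Submodule.mem_sup_left (Submodule.mem_sup_right (Ideal.subset_span rfl))
  have hhpQ : hp k e ∈ Q := by
    rw [hQ, Submodule.add_eq_sup, Submodule.add_eq_sup]
    exact Submodule.mem_sup_right (Ideal.subset_span rfl)
  constructor
  · intro hmem
    rw [Submodule.add_eq_sup] at hmem
    obtain ⟨u, hu, v, hv, huv⟩ := Submodule.mem_sup.1 hmem
    obtain ⟨a, ha⟩ := Ideal.mem_span_singleton'.1 hu
    obtain ⟨b, hb⟩ := Ideal.mem_span_singleton'.1 hv
    have hq0 : pand k e (p - sand k e a * M1 k e - sand k e b * gp k e) = 0 := by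
      have hsa : pand k e (sand k e a) = a := by rw [← AlgHom.comp_apply, pand_sand]; rfl
      have hsb : pand k e (sand k e b) = b := by rw [← AlgHom.comp_apply, pand_sand]; rfl
      rw [map_sub, map_sub, map_mul, map_mul, pand_M1 k e he, pand_gp, hsa, hsb, ← huv,
        ← ha, ← hb]
      ring
    have hqz := pand_ker k e hq0
    have hM1mem : M1 k e ∈ Q ⊔ Ideal.span {(X (zI e) : MvPolynomial (Fin (e + e + 3)) k)} := by
      rw [hM1_eq, hz_eq]
      refine Ideal.sub_mem _ ?_ (Submodule.mem_sup_left hhpQ)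
      exact Submodule.mem_sup_right
        (Ideal.mul_mem_right _ _ (Ideal.subset_span rfl))
    have hsplit : p = (p - sand k e a * M1 k e - sand k e b * gp k e)
        + sand k e a * M1 k e + sand k e b * gp k e := by ring
    rw [hsplit]
    exact Ideal.add_mem _ (Ideal.add_mem _ (Submodule.mem_sup_right hqz)
        (Ideal.mul_mem_left _ _ hM1mem))
      (Ideal.mul_mem_left _ _ (Submodule.mem_sup_left hgpQ))
  · intro hmem
    obtain ⟨q, hq, r, hr, hqr⟩ := Submodule.mem_sup.1 hmem
    rw [hQ, Submodule.add_eq_sup, Submodule.add_eq_sup] at hq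
    obtain ⟨u, hu, w3, hw3, huw⟩ := Submodule.mem_sup.1 hq
    obtain ⟨u1, hu1, u2, hu2, hu12⟩ := Submodule.mem_sup.1 hu
    obtain ⟨α, hα⟩ := Ideal.mem_span_singleton'.1 hu1
    obtain ⟨β, hβ⟩ := Ideal.mem_span_singleton'.1 hu2
    obtain ⟨γ, hγ⟩ := Ideal.mem_span_singleton'.1 hw3
    obtain ⟨δ, hδ⟩ := Ideal.mem_span_singleton'.1 hr
    have hrep : pand k e p
        = (pand k e α * ∏ i ∈ Finset.Icc 1 e, Xv k (e + e + 2) (2 * i)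
            - pand k e γ) * M1B k e + pand k e β * M2B k e := by
      have hp0 : p = α * fp k e + β * gp k e + γ * hp k e + δ * X (zI e) := by
        rw [hα, hβ, hγ, hδ, hu12, huw, hqr]
      have hpz : pand k e (X (zI e)) = 0 := by rw [← hz_eq]; exact pand_z k e
      rw [hp0, map_add, map_add, map_add, map_mul, map_mul, map_mul, map_mul,
        pand_fp k e he, pand_gp, pand_hp k e he, hpz]
      ring
    rw [hrep, Submodule.add_eq_sup]
    exact Ideal.add_mem _
      (Ideal.mul_mem_left _ _ (Submodule.mem_sup_left (Ideal.subset_span rfl)))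
      (Ideal.mul_mem_left _ _ (Submodule.mem_sup_right (Ideal.subset_span rfl)))

theorem aux (he : 1 ≤ e) (Q : Ideal (MvPolynomial (Fin (e + e + 3)) k))
    (hQ : Q = Ideal.span {fp k e} + Ideal.span {gp k e} + Ideal.span {hp k e}) :
    Ideal.Quotient.mk Q (Xv k (e + e + 3) (e + e + 2)) ∈
      nonZeroDivisors (MvPolynomial (Fin (e + e + 3)) k ⧸ Q) ∧
    Nonempty (((MvPolynomial (Fin (e + e + 3)) k ⧸ Q) ⧸
        Ideal.span {Ideal.Quotient.mk Q (Xv k (e + e + 3) (e + e + 2))}) ≃ₐ[k]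
      (MvPolynomial (Fin (e + e + 2)) k ⧸
        (Ideal.span {∏ i ∈ Finset.Icc 0 e, Xv k (e + e + 2) (2 * i + 1)} +
          Ideal.span {∏ i ∈ Finset.Icc 1 (e + 1), Xv k (e + e + 2) (2 * i)}))) := by
  constructor
  · rw [mem_nonZeroDivisors_iff_right]
    intro q hq
    obtain ⟨p, rfl⟩ := Ideal.Quotient.mk_surjective q
    rw [← map_mul, Ideal.Quotient.eq_zero_iff_mem, hz_eq] at hq
    exact Ideal.Quotient.eq_zero_iff_mem.2 (mul_z_mem e he Q hQ p hq)
  · show Nonempty (_ ≃ₐ[k] (MvPolynomial (Fin (e + e + 2)) k ⧸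
      (Ideal.span {M1B k e} + Ideal.span {M2B k e})))
    set J : Ideal (MvPolynomial (Fin (e + e + 3)) k) := Ideal.span {X (zI e)} with hJ
    set Ip : Ideal (MvPolynomial (Fin (e + e + 2)) k)
      := Ideal.span {M1B k e} + Ideal.span {M2B k e} with hIp
    have hmap : Ideal.span {Ideal.Quotient.mk Q (Xv k (e + e + 3) (e + e + 2))}
        = J.map (Ideal.Quotient.mkₐ k Q) := by
      rw [hJ, Ideal.map_span, Set.image_singleton, hz_eq]
      rfl
    rw [hmap]
    refine ⟨AlgEquiv.trans (DoubleQuot.quotQuotEquivQuotSupₐ k Q J) ?_⟩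
    have hker : RingHom.ker ((Ideal.Quotient.mkₐ k Ip).comp (pand k e)) = Q ⊔ J := by
      ext p
      rw [RingHom.mem_ker, AlgHom.comp_apply, Ideal.Quotient.mkₐ_eq_mk,
        Ideal.Quotient.eq_zero_iff_mem, hIp]
      exact ker_iff k e he Q hQ p
    have hsurj : Function.Surjective ((Ideal.Quotient.mkₐ k Ip).comp (pand k e)) := by
      rw [AlgHom.coe_comp]
      exact (Ideal.Quotient.mkₐ_surjective k Ip).comp (pand_surj k e)
    exact (Ideal.quotientEquivAlgOfEq k hker.symm).trans
      (Ideal.quotientKerAlgEquivOfSurjective hsurj)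

end AuxMain

end Unproj

/-- Unprojection for `d` even, `m = d + 1`. In `k[x_1,…,x_{d+1},z,T]` (with `z, T` the last
two variables) let `Q` be generated by `x_1 ⋯ x_{d+1}`, by `T·x_2x_4⋯x_d`, and by
`(zT − x_1x_{d+1})·x_3x_5⋯x_{d−1}` (empty products being `1`), and let
`S = k[x_1,…,x_{d+1},z,T]/Q`. Then the image of `z` in `S` is a non-zero-divisor, and
`S/(z) ≅ k[x_1,…,x_{d+2}]/(∏_{i=0}^{d/2} x_{2i+1}, ∏_{i=1}^{d/2+1} x_{2i}) = k[Δ(d,d+2)]`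
as `k`-algebras. -/
theorem unprojection_cyclic_even_initial (k : Type*) [Field k] (d : ℕ)
    (hd : Even d) (hd2 : 2 ≤ d)
    (Q : Ideal (MvPolynomial (Fin (d + 3)) k))
    (hQ : Q = Ideal.span {∏ i ∈ Finset.Icc 1 (d + 1), Xv k (d + 3) i} +
      Ideal.span {Xv k (d + 3) (d + 3) * ∏ i ∈ Finset.Icc 1 (d / 2), Xv k (d + 3) (2 * i)} +
      Ideal.span {(Xv k (d + 3) (d + 2) * Xv k (d + 3) (d + 3) -
          Xv k (d + 3) 1 * Xv k (d + 3) (d + 1)) *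
        ∏ i ∈ Finset.Icc 1 (d / 2 - 1), Xv k (d + 3) (2 * i + 1)}) :
    Ideal.Quotient.mk Q (Xv k (d + 3) (d + 2)) ∈
      nonZeroDivisors (MvPolynomial (Fin (d + 3)) k ⧸ Q) ∧
    Nonempty (((MvPolynomial (Fin (d + 3)) k ⧸ Q) ⧸
        Ideal.span {Ideal.Quotient.mk Q (Xv k (d + 3) (d + 2))}) ≃ₐ[k]
      (MvPolynomial (Fin (d + 2)) k ⧸
        (Ideal.span {∏ i ∈ Finset.Icc 0 (d / 2), Xv k (d + 2) (2 * i + 1)} +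
          Ideal.span {∏ i ∈ Finset.Icc 1 (d / 2 + 1), Xv k (d + 2) (2 * i)}))) := by
  obtain ⟨e, rfl⟩ := hd
  have he : 1 ≤ e := by omega
  have hdiv : (e + e) / 2 = e := by omega
  rw [hdiv] at hQ ⊢
  exact Unproj.aux k e he Q hQ
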